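/- Let $U_1, U_2 \in M_n(\mathbb{C})$ be unitaries and $V = U_1^* U_2$. Suppose there exists $\varepsilon > 0$ such that for all positive semidefinite $x \in M_n(\mathbb{C})$, $U_2^* x U_2 \ge 2\varepsilon\, U_1^* x U_1$ and $U_1^* x U_1 \ge 2\varepsilon\, U_2^* x U_2$ (in the Loewner order). Then $V$ is a diagonal matrix. -/

import Mathlib

open Matrix
open scoped ComplexOrder

/-- If for some `ε > 0` and all positive semidefinite `x` one has
`U₂* x U₂ ≥ 2ε U₁* x U₁` and `U₁* x U₁ ≥ 2ε U₂* x U₂` (Loewner order), then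
`V = U₁* U₂` is diagonal. -/
theorem stmt5 {n : ℕ} (U₁ U₂ : Matrix (Fin n) (Fin n) ℂ)
    (h1 : U₁ᴴ * U₁ = 1) (h2 : U₂ᴴ * U₂ = 1) (ε : ℝ) (hε : 0 < ε)
    (h : ∀ x : Matrix (Fin n) (Fin n) ℂ, x.PosSemidef →
      (U₂ᴴ * x * U₂ - (2 * ε) • (U₁ᴴ * x * U₁)).PosSemidef ∧
      (U₁ᴴ * x * U₁ - (2 * ε) • (U₂ᴴ * x * U₂)).PosSemidef) :
    ∀ i j, i ≠ j → (U₁ᴴ * U₂) i j = 0 := by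
  intro i j hij
  set V : Matrix (Fin n) (Fin n) ℂ := U₁ᴴ * U₂ with hV
  set E : Matrix (Fin n) (Fin n) ℂ := Matrix.single i i 1 with hE
  have hEE : E * Eᴴ = E := by
    rw [hE]
    rw [show (Matrix.single i i (1:ℂ))ᴴ = Matrix.single i i 1 by
      ext a b; simp [Matrix.single, Matrix.conjTranspose_apply, and_comm]]
    rw [Matrix.single_mul_single_same]
    simp
  have hxpsd : (U₁ * E * U₁ᴴ).PosSemidef := by
    have : U₁ * E * U₁ᴴ = (U₁ * E) * (U₁ * E)ᴴ := by
      rw [Matrix.conjTranspose_mul, ← Matrix.mul_assoc (U₁ * E) Eᴴ U₁ᴴ,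
        Matrix.mul_assoc U₁ E Eᴴ, hEE]
    rw [this]
    exact Matrix.posSemidef_self_mul_conjTranspose _
  obtain ⟨-, hkey⟩ := h _ hxpsd
  have key1 : U₁ᴴ * (U₁ * E * U₁ᴴ) * U₁ = E := by
    rw [← Matrix.mul_assoc, ← Matrix.mul_assoc, h1, Matrix.mul_assoc, h1]
    simp
  have key2 : U₂ᴴ * (U₁ * E * U₁ᴴ) * U₂ = Vᴴ * E * V := by
    simp only [hV, Matrix.conjTranspose_mul, Matrix.conjTranspose_conjTranspose,
      Matrix.mul_assoc]
  rw [key1, key2] at hkey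
  have hq := hkey.dotProduct_mulVec_nonneg (Pi.single j 1)
  have hdiag : star (Pi.single j 1 : Fin n → ℂ) ⬝ᵥ
      ((E - (2 * ε) • (Vᴴ * E * V)) *ᵥ Pi.single j 1)
      = - ((2 * ε : ℂ) * (star (V i j) * V i j)) := by
    have hEjj : E j j = 0 := by simp [hE, Matrix.single, hij]
    have hVEV : (Vᴴ * E * V) j j = star (V i j) * V i j := by
      simp [Matrix.mul_apply, hE, Matrix.single, Matrix.conjTranspose_apply,
        ite_and, Finset.sum_ite_eq, ite_mul]
    have hstar : star (Pi.single j (1:ℂ) : Fin n → ℂ) = Pi.single j 1 := by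
      ext k; simp [Pi.single_apply, apply_ite]
    rw [hstar, single_dotProduct, Matrix.mulVec_single]
    simp [Matrix.sub_apply, Matrix.smul_apply, hEjj, hVEV]
  rw [hdiag] at hq
  have hns : star (V i j) * V i j = (Complex.normSq (V i j) : ℂ) := by
    rw [Complex.star_def, Complex.normSq_eq_conj_mul_self]
  rw [hns] at hq
  have : (0:ℂ) ≤ ((-(2 * ε * Complex.normSq (V i j)) : ℝ) : ℂ) := by
    convert hq using 1; push_cast; ring
  rw [Complex.zero_le_real] at this
  have hns0 : Complex.normSq (V i j) = 0 := by nlinarith [Complex.normSq_nonneg (V i j)]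
  exact Complex.normSq_eq_zero.mp hns0
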